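/- Every strongly connected semi-complete directed graph on n ≥ 3 vertices contains a directed cycle passing through all n vertices (a directed Hamiltonian cycle). -/

import Mathlib

/-- A digraph (edge relation) is semi-complete if between any two distinct vertices there is
an edge in at least one direction. -/
def SemiComplete {V : Type*} (r : V → V → Prop) : Prop :=
  ∀ i j : V, i ≠ j → (r i j ∨ r j i)

/-- A digraph is strongly connected if for every pair of distinct vertices there is a
directed path from one to the other. -/
def StronglyConnected {V : Type*} (r : V → V → Prop) : Prop :=
  ∀ i j : V, i ≠ j → Relation.ReflTransGen r i j

theorem List.chain_split {α : Type*} {R : α → α → Prop} {a b : α} {l₁ l₂ : List α} :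
    List.Chain R a (l₁ ++ b :: l₂) ↔ List.Chain R a (l₁ ++ [b]) ∧ List.Chain R b l₂ :=
  List.isChain_cons_split

namespace HamAux

variable {V : Type*}

/-- `Cyc r a l` : the list `a :: l` is a directed cycle. -/
def Cyc (r : V → V → Prop) (a : V) (l : List V) : Prop := List.Chain r a (l ++ [a])

lemma cyc_rot {r : V → V → Prop} {a b : V} {l1 l2 : List V}
    (h : Cyc r a (l1 ++ b :: l2)) : Cyc r b (l2 ++ a :: l1) := by
  unfold Cyc at *
  have h1 : (l1 ++ b :: l2) ++ [a] = l1 ++ b :: (l2 ++ [a]) := by simp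
  rw [h1, List.chain_split] at h
  have h2 : (l2 ++ a :: l1) ++ [b] = l2 ++ a :: (l1 ++ [b]) := by simp
  rw [h2, List.chain_split]
  exact ⟨h.2, h.1⟩

/-- Forward propagation: if an edge goes from the head into `u` and there is no insertion
point for `u`, every vertex of the chain sends an edge to `u`. -/
lemma fwd {r : V → V → Prop} (hsemi : SemiComplete r) {u : V} :
    ∀ (m : List V) (c : V), List.Chain r c m → r c u →
      (∀ x y, [x, y] <:+: (c :: m) → r x u → ¬ r u y) →
      (∀ y ∈ m, y ≠ u) → ∀ v ∈ c :: m, r v u := by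
  intro m
  induction m with
  | nil =>
    intro c _ hcu _ _ v hv
    simp at hv; subst hv; exact hcu
  | cons b m' ih =>
    intro c hch hcu H hne v hv
    have hinf : [c, b] <:+: (c :: b :: m') := ⟨[], m', by simp⟩
    have hub : ¬ r u b := H c b hinf hcu
    have hbu : r b u := by
      rcases hsemi b u (hne b (by simp)) with h | h
      · exact h
      · exact absurd h hub
    rcases List.mem_cons.mp hv with h | h
    · subst h; exact hcu
    · refine ih b (List.chain_cons.mp hch).2 hbu ?_ ?_ v h
      · intro x y hxy; exact H x y (hxy.trans ⟨[c], [], by simp⟩)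
      · intro y hy; exact hne y (by simp [hy])

/-- From one edge into `u` somewhere on the chain, deduce an edge from the last vertex. -/
lemma last_edge {r : V → V → Prop} (hsemi : SemiComplete r) {u : V} :
    ∀ (m : List V) (c : V), List.Chain r c m →
      (∀ x y, [x, y] <:+: (c :: m) → r x u → ¬ r u y) →
      (∀ y ∈ m, y ≠ u) → ∀ v ∈ c :: m, r v u →
      r ((c :: m).getLast (by simp)) u := by
  intro m
  induction m with
  | nil =>
    intro c _ _ _ v hv hvu
    simp at hv; subst hv; simpa using hvu
  | cons b m' ih =>
    intro c hch H hne v hv hvu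
    have hlast : (c :: b :: m').getLast (by simp) = (b :: m').getLast (by simp) := by
      simp [List.getLast_cons]
    rw [hlast]
    rcases List.mem_cons.mp hv with h | h
    · have hcu : r c u := h ▸ hvu
      have hall := fwd hsemi (b :: m') c hch hcu H hne
      have := hall ((b :: m').getLast (by simp)) (by
        right; exact List.getLast_mem _)
      exact this
    · refine ih b (List.chain_cons.mp hch).2 ?_ ?_ v h hvu
      · intro x y hxy; exact H x y (hxy.trans ⟨[c], [], by simp⟩)
      · intro y hy; exact hne y (by simp [hy])

/-- Every member of `m` has a predecessor in the chain `c :: m`. -/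
lemma pred_exists : ∀ (m : List V) (c : V), ∀ v ∈ m, ∃ x, [x, v] <:+: (c :: m) := by
  intro m
  induction m with
  | nil => intro c v hv; simp at hv
  | cons b m' ih =>
    intro c v hv
    rcases List.mem_cons.mp hv with h | h
    · subst h; exact ⟨c, [], m', by simp⟩
    · obtain ⟨x, hx⟩ := ih b v h
      exact ⟨x, hx.trans ⟨[c], [], by simp⟩⟩

/-- Insertion of `u` into a cycle at an insertion point. -/
lemma insert_cyc {r : V → V → Prop} {a u x y : V} {l : List V}
    (hc : Cyc r a l) (hinf : [x, y] <:+: (a :: l ++ [a]))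
    (hxu : r x u) (huy : r u y) :
    ∃ b m, Cyc r b m ∧ (b :: m).Perm (u :: a :: l) := by
  obtain ⟨s, t, hst⟩ := hinf
  have hst' : s ++ x :: y :: t = a :: (l ++ [a]) := by simpa using hst
  cases s with
  | nil =>
    obtain ⟨rfl, hyt⟩ : x = a ∧ y :: t = l ++ [a] := by simpa using hst'
    cases l with
    | nil =>
      obtain ⟨rfl, rfl⟩ : y = x ∧ t = [] := by simpa using hyt
      exact ⟨y, [u], List.Chain.cons hxu (List.Chain.cons huy List.Chain.nil),
        List.Perm.swap _ _ _⟩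
    | cons b l' =>
      obtain ⟨rfl, ht⟩ : y = b ∧ t = l' ++ [x] := by simpa using hyt
      refine ⟨x, u :: y :: l', ?_, List.Perm.swap _ _ _⟩
      have h2 : List.Chain r y (l' ++ [x]) := (List.chain_cons.mp hc).2
      exact List.chain_cons.mpr ⟨hxu, List.chain_cons.mpr ⟨huy, h2⟩⟩
  | cons a1 s' =>
    have hrest : s' ++ x :: y :: t = l ++ [a] := by
      have h := hst'
      rw [List.cons_append, List.cons.injEq] at h
      exact h.2
    rcases List.eq_nil_or_concat t with rfl | ⟨t', z, rfl⟩
    · have h2 : (s' ++ [x]) ++ [y] = l ++ [a] := by simpa using hrest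
      obtain ⟨hl, hy⟩ := List.append_inj' h2 rfl
      obtain rfl : y = a := by simpa using hy
      subst hl
      refine ⟨y, (s' ++ [x]) ++ [u], ?_, ?_⟩
      · have hc' : List.Chain r y (s' ++ x :: [y]) := by
          unfold Cyc at hc; simpa using hc
        rw [List.chain_split] at hc'
        unfold Cyc
        have h3 : ((s' ++ [x]) ++ [u]) ++ [y] = s' ++ x :: [u, y] := by simp
        rw [h3, List.chain_split]
        exact ⟨hc'.1, List.Chain.cons hxu (List.Chain.cons huy List.Chain.nil)⟩
      · have h4 : y :: ((s' ++ [x]) ++ [u]) = (y :: (s' ++ [x])) ++ u :: [] := by simp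
        rw [h4]
        have h5 := List.perm_middle (a := u) (l₁ := y :: (s' ++ [x])) (l₂ := [])
        simpa using h5
    · have h2 : (s' ++ x :: y :: t') ++ [z] = l ++ [a] := by simpa using hrest
      obtain ⟨hl, hz⟩ := List.append_inj' h2 rfl
      obtain rfl : z = a := by simpa using hz
      subst hl
      refine ⟨z, s' ++ x :: u :: y :: t', ?_, ?_⟩
      · have hc' : List.Chain r z (s' ++ x :: (y :: t' ++ [z])) := by
          unfold Cyc at hc; simpa using hc
        rw [List.chain_split] at hc'
        have h6 := List.chain_cons.mp hc'.2
        unfold Cyc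
        have h3 : (s' ++ x :: u :: y :: t') ++ [z] = s' ++ x :: (u :: y :: t' ++ [z]) := by
          simp
        rw [h3, List.chain_split]
        exact ⟨hc'.1, List.chain_cons.mpr ⟨hxu, List.chain_cons.mpr ⟨huy, h6.2⟩⟩⟩
      · have h4 : z :: (s' ++ x :: u :: y :: t') = (z :: s' ++ [x]) ++ u :: (y :: t') := by
          simp
        rw [h4]
        have h5 := List.perm_middle (a := u) (l₁ := z :: s' ++ [x]) (l₂ := y :: t')
        refine h5.trans ?_
        simp

/-- The trichotomy for an outside vertex. -/
lemma trichotomy {r : V → V → Prop} (hsemi : SemiComplete r) {a u : V} {l : List V}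
    (hc : Cyc r a l) (hu : u ∉ a :: l) :
    (∃ b m, Cyc r b m ∧ (b :: m).Perm (u :: a :: l)) ∨
    (∀ v ∈ a :: l, r v u ∧ ¬ r u v) ∨
    (∀ v ∈ a :: l, ¬ r v u) := by
  classical
  by_cases hins : ∃ x y, [x, y] <:+: (a :: l ++ [a]) ∧ r x u ∧ r u y
  · obtain ⟨x, y, hinf, hxu, huy⟩ := hins
    exact Or.inl (insert_cyc hc hinf hxu huy)
  · push_neg at hins
    have H : ∀ x y, [x, y] <:+: (a :: (l ++ [a])) → r x u → ¬ r u y := by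
      intro x y hxy hxu
      exact hins x y (by simpa using hxy) hxu
    have hmem : ∀ v ∈ a :: (l ++ [a]), v ∈ a :: l := by
      intro v hv
      rcases List.mem_cons.mp hv with h | h
      · simp [h]
      · rcases List.mem_append.mp h with h | h
        · simp [h]
        · simp at h; simp [h]
    have hne : ∀ y ∈ l ++ [a], y ≠ u := by
      intro y hy
      intro h; subst h
      exact hu (hmem y (by simp [hy]))
    by_cases hA : ∃ v ∈ a :: l, r v u
    · right; left  -- middle case
      obtain ⟨v, hv, hvu⟩ := hA
      have hv' : v ∈ a :: (l ++ [a]) := by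
        rcases List.mem_cons.mp hv with h | h
        · simp [h]
        · simp [h]
      have hlasta : (a :: (l ++ [a])).getLast (by simp) = a := by
        simp [List.getLast_cons, List.getLast_append_singleton]
      have hau : r a u := by
        have := last_edge hsemi (l ++ [a]) a hc H hne v hv' hvu
        rwa [hlasta] at this
      have hall := fwd hsemi (l ++ [a]) a hc hau H hne
      intro w hw
      have hw' : w ∈ a :: (l ++ [a]) := by
        rcases List.mem_cons.mp hw with h | h
        · simp [h]
        · simp [h]
      refine ⟨hall w hw', ?_⟩
      -- find predecessor of w
      have hwm : w ∈ l ++ [a] := by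
        rcases List.mem_cons.mp hw with h | h
        · subst h; simp
        · simp [h]
      obtain ⟨x, hx⟩ := pred_exists (l ++ [a]) a w hwm
      have hxu : r x u := by
        have hxmem : x ∈ a :: (l ++ [a]) := hx.subset (by simp)
        exact hall x hxmem
      exact H x w hx hxu
    · push_neg at hA
      exact Or.inr (Or.inr hA)

end HamAux

section Main

open HamAux

variable {n : ℕ} {r : Fin n → Fin n → Prop}

lemma exists_dup_decomp {α : Type*} : ∀ {l : List α}, ¬ l.Nodup →
    ∃ (x : α) (p q s : List α), l = p ++ x :: q ++ x :: s := by
  intro l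
  induction l with
  | nil => intro h; simp at h
  | cons a t ih =>
    intro h
    by_cases hat : a ∈ t
    · obtain ⟨q, s, hqs⟩ := List.append_of_mem hat
      exact ⟨a, [], q, s, by simp [hqs]⟩
    · have hnt : ¬ t.Nodup := by
        intro h2; exact h (List.nodup_cons.mpr ⟨hat, h2⟩)
      obtain ⟨x, p, q, s, hpqs⟩ := ih hnt
      exact ⟨x, a :: p, q, s, by simp [hpqs]⟩

/-- Extract a simple cycle from a closed walk. -/
lemma cyc_of_walk :
    ∀ (k : ℕ) (m : List (Fin n)) (c : Fin n), m.length ≤ k → m ≠ [] →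
      List.Chain r c m → (c :: m).getLast (by simp) = c →
      ∃ a l, Cyc r a l ∧ (a :: l).Nodup := by
  intro k
  induction k with
  | zero => intro m c hle hne; interval_cases hm : m.length <;> simp_all
  | succ k ih =>
    intro m c hle hne hch hlast
    classical
    by_cases hnd : (c :: m.dropLast).Nodup
    · refine ⟨c, m.dropLast, ?_, hnd⟩
      unfold Cyc
      have hm : m.dropLast ++ [c] = m := by
        have := List.dropLast_append_getLast hne
        rwa [show m.getLast hne = c by
          rw [← hlast]; exact (List.getLast_cons hne).symm] at this
      rw [hm]; exact hch
    · -- there is a duplicate in c :: m.dropLast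
      obtain ⟨x, p, q, s, hpqs⟩ := exists_dup_decomp hnd
      -- c :: m.dropLast = p ++ x :: q ++ x :: s
      have hdecomp : c :: m = p ++ (x :: q ++ [x]) ++ (s ++ [c]) := by
        have h1 : c :: m = (c :: m.dropLast) ++ [c] := by
          conv_lhs => rw [← List.dropLast_append_getLast (l := c :: m) (by simp)]
          rw [List.dropLast_cons_of_ne_nil hne, hlast]
        rw [h1, hpqs]; simp
      have hchain : List.Chain' r (x :: q ++ [x]) := by
        have hall : List.Chain' r (c :: m) := hch
        exact hall.infix ⟨p, s ++ [c], by rw [← hdecomp]⟩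
      have hch2 : List.Chain r x (q ++ [x]) := hchain
      refine ih (q ++ [x]) x ?_ (by simp) hch2 (by simp [List.getLast_append_singleton])
      have hlen3 : m.length + 1 = p.length + q.length + s.length + 3 := by
        have h2 := congrArg List.length hdecomp
        simp [List.length_append] at h2
        omega
      simp only [List.length_append, List.length_cons, List.length_nil]
      omega

lemma chain_replace_last {r : Fin n → Fin n → Prop} :
    ∀ (l : List (Fin n)) (a c d : Fin n), List.Chain r a (l ++ [c]) →
      r ((a :: l).getLast (by simp)) d → List.Chain r a (l ++ [d]) := by
  intro l
  induction l with
  | nil =>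
    intro a c d _ h
    simpa using List.Chain.cons (by simpa using h) List.Chain.nil
  | cons b l' ih =>
    intro a c d hch h
    have h1 := List.chain_cons.mp hch
    have h2 : (a :: b :: l').getLast (by simp) = (b :: l').getLast (by simp) := by
      simp [List.getLast_cons]
    rw [h2] at h
    exact List.chain_cons.mpr ⟨h1.1, ih b c d h1.2 h⟩

lemma hreach {r : Fin n → Fin n → Prop} (P : Fin n → Prop) {w z : Fin n}
    (h : Relation.ReflTransGen r w z) (hPw : P w)
    (hcl : ∀ x y, P x → r x y → P y) : P z := by
  induction h with
  | refl => exact hPw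
  | tail h1 h2 ih => exact hcl _ _ ih h2

lemma extend (hsemi : SemiComplete r) (hsc : StronglyConnected r)
    {a : Fin n} {l : List (Fin n)} (hc : Cyc r a l) (hnd : (a :: l).Nodup)
    (hlt : (a :: l).length < n) :
    ∃ b m, Cyc r b m ∧ (b :: m).Nodup ∧ (a :: l).length < (b :: m).length := by
  classical
  have hout : ∃ u : Fin n, u ∉ a :: l := by
    by_contra h
    push_neg at h
    have h2 : (Finset.univ : Finset (Fin n)).card ≤ (a :: l).toFinset.card := by
      apply Finset.card_le_card
      intro u _; simpa using h u
    rw [List.toFinset_card_of_nodup hnd] at h2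
    simp at h2
    simp only [List.length_cons] at hlt
    omega
  by_cases hins : ∃ u, u ∉ a :: l ∧ ∃ b m, Cyc r b m ∧ (b :: m).Perm (u :: a :: l)
  · obtain ⟨u, hu, b, m, hcyc, hperm⟩ := hins
    refine ⟨b, m, hcyc, ?_, ?_⟩
    · exact hperm.nodup_iff.mpr (List.nodup_cons.mpr ⟨hu, hnd⟩)
    · rw [hperm.length_eq]; simp
  · push_neg at hins
    have hAB : ∀ u, u ∉ a :: l →
        (∀ v ∈ a :: l, r v u ∧ ¬ r u v) ∨ (∀ v ∈ a :: l, r u v ∧ ¬ r v u) := by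
      intro u hu
      rcases trichotomy hsemi hc hu with h | h | h
      · obtain ⟨b, m, h1, h2⟩ := h
        exact absurd h2 (hins u hu b m h1)
      · exact Or.inl h
      · right
        intro v hv
        have hne : u ≠ v := fun he => hu (he ▸ hv)
        rcases hsemi u v hne with h2 | h2
        · exact ⟨h2, h v hv⟩
        · exact absurd h2 (h v hv)
    by_cases hBex : ∃ u, u ∉ a :: l ∧ ∀ v ∈ a :: l, r u v ∧ ¬ r v u
    · obtain ⟨t, ht, hBt⟩ := hBex
      by_cases hedge : ∃ s t', (s ∉ a :: l ∧ ∀ v ∈ a :: l, r v s ∧ ¬ r s v) ∧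
          (t' ∉ a :: l ∧ ∀ v ∈ a :: l, r t' v ∧ ¬ r v t') ∧ r s t'
      · obtain ⟨s, t', ⟨hs, hAs⟩, ⟨ht', hBt'⟩, hst⟩ := hedge
        refine ⟨s, t' :: a :: l, ?_, ?_, by simp⟩
        · unfold Cyc
          refine List.chain_cons.mpr ⟨hst, List.chain_cons.mpr
            ⟨(hBt' a (by simp)).1, ?_⟩⟩
          have hlast : r ((a :: l).getLast (by simp)) s :=
            (hAs _ (List.getLast_mem _)).1
          exact chain_replace_last l a a s hc hlast
        · have hne : s ≠ t' := by
            intro he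
            have h1 : ¬ r s a := (hAs a (by simp)).2
            have h2 : r t' a := (hBt' a (by simp)).1
            rw [← he] at h2
            exact h1 h2
          refine List.nodup_cons.mpr ⟨?_, List.nodup_cons.mpr ⟨ht', hnd⟩⟩
          simp only [List.mem_cons, not_or]
          exact ⟨hne, fun h => hs (by simp [h]), fun h => hs (by simp [h])⟩
      · exfalso
        have hP : ∀ w, Relation.ReflTransGen r a w →
            (w ∈ a :: l ∨ (w ∉ a :: l ∧ ∀ v ∈ a :: l, r v w ∧ ¬ r w v)) := by
          intro w hw
          refine hreach (fun w => w ∈ a :: l ∨ (w ∉ a :: l ∧ ∀ v ∈ a :: l, r v w ∧ ¬ r w v))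
            hw (Or.inl (by simp)) ?_
          intro x y hx hxy
          by_cases hy : y ∈ a :: l
          · exact Or.inl hy
          · rcases hAB y hy with h | h
            · exact Or.inr ⟨hy, h⟩
            · exfalso
              rcases hx with hx | ⟨hx, hxA⟩
              · exact (h x hx).2 hxy
              · exact hedge ⟨x, y, ⟨hx, hxA⟩, ⟨hy, h⟩, hxy⟩
        have hta : a ≠ t := fun he => ht (he ▸ (by simp : a ∈ a :: l))
        rcases hP t (hsc a t hta) with h | ⟨_, h⟩
        · exact ht h
        · exact (hBt a (by simp)).2 (h a (by simp)).1
    · exfalso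
      push_neg at hBex
      have hallA : ∀ u, u ∉ a :: l → ∀ v ∈ a :: l, r v u ∧ ¬ r u v := by
        intro u hu
        rcases hAB u hu with h | h
        · exact h
        · exact absurd h (by
            intro hh
            obtain ⟨v, hv, hvp⟩ := hBex u hu
            exact (hh v hv).2 (hvp (hh v hv).1))
      obtain ⟨u0, hu0⟩ := hout
      have hne : u0 ≠ a := fun he => hu0 (he ▸ (by simp : a ∈ a :: l))
      have hP : (a : Fin n) ∉ a :: l := by
        refine hreach (fun w => w ∉ a :: l) (hsc u0 a hne) hu0 ?_
        intro x y hx hxy hy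
        exact (hallA x hx y hy).2 hxy
      exact hP (by simp)

lemma grow (hsemi : SemiComplete r) (hsc : StronglyConnected r) :
    ∀ (d : ℕ) (a : Fin n) (l : List (Fin n)), Cyc r a l → (a :: l).Nodup →
      n - (a :: l).length ≤ d →
      ∃ b m, Cyc r b m ∧ (b :: m).Nodup ∧ (b :: m).length = n := by
  intro d
  induction d with
  | zero =>
    intro a l hc hnd hle
    have hlen : (a :: l).length ≤ n := by
      have := hnd.length_le_card
      simpa using this
    exact ⟨a, l, hc, hnd, by omega⟩
  | succ d ih =>
    intro a l hc hnd hle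
    by_cases heq : (a :: l).length = n
    · exact ⟨a, l, hc, hnd, heq⟩
    · have hlen : (a :: l).length ≤ n := by
        have := hnd.length_le_card
        simpa using this
      have hlt : (a :: l).length < n := lt_of_le_of_ne hlen heq
      obtain ⟨b, m, hc', hnd', hlen'⟩ := extend hsemi hsc hc hnd hlt
      exact ih b m hc' hnd' (by omega)


end Main

open HamAux in
theorem hamiltonian_cycle_of_stronglyConnected_semiComplete {n : ℕ} (hn : 3 ≤ n)
    (r : Fin n → Fin n → Prop) (hsemi : SemiComplete r) (hsc : StronglyConnected r) :
    ∃ c : ZMod n → Fin n, Function.Bijective c ∧ ∀ i : ZMod n, r (c i) (c (i + 1)) := by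
  classical
  haveI : NeZero n := ⟨by omega⟩
  haveI : Fact (1 < n) := ⟨by omega⟩
  -- find an initial cycle
  have hinit : ∃ a l, Cyc r a l ∧ (a :: l).Nodup := by
    have h01 : (⟨0, by omega⟩ : Fin n) ≠ ⟨1, by omega⟩ := by simp [Fin.ext_iff]
    obtain ⟨p, q, hpq, hedge⟩ :
        ∃ p q : Fin n, p ≠ q ∧ r p q := by
      rcases hsemi _ _ h01 with h | h
      · exact ⟨_, _, h01, h⟩
      · exact ⟨_, _, h01.symm, h⟩
    obtain ⟨l, hch, hlast⟩ := List.exists_isChain_cons_of_relationReflTransGen (hsc q p hpq.symm)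
    refine cyc_of_walk (q :: l).length (q :: l) p le_rfl (by simp)
      (List.chain_cons.mpr ⟨hedge, hch⟩) ?_
    rw [List.getLast_cons (by simp)]
    exact hlast
  obtain ⟨a0, l0, hc0, hnd0⟩ := hinit
  obtain ⟨a, l, hc, hnd, hlen⟩ := grow hsemi hsc n a0 l0 hc0 hnd0 (by omega)
  set L := a :: l with hLdef
  have hL0 : L.length = n := hlen
  refine ⟨fun i => L.get ⟨ZMod.val i, by rw [hL0]; exact ZMod.val_lt i⟩, ?_, ?_⟩
  · rw [Fintype.bijective_iff_injective_and_card]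
    constructor
    · intro i j hij
      have h2 := List.nodup_iff_injective_get.mp hnd hij
      apply ZMod.val_injective
      simpa using congrArg Fin.val h2
    · simp [ZMod.card]
  · intro i
    have hchain : List.Chain' r (L ++ [a]) := hc
    replace hchain := List.isChain_iff_getElem.mp hchain
    have hlen2 : (L ++ [a]).length = n + 1 := by simp [hL0]
    have hkey : ∀ (j : ℕ) (hj : j < n),
        r (L.get ⟨j, by omega⟩) (L.get ⟨(j + 1) % n, by
          rw [hL0]; exact Nat.mod_lt _ (by omega)⟩) := by
      intro j hj
      have h3 : r ((L ++ [a]).get ⟨j, by omega⟩) ((L ++ [a]).get ⟨j + 1, by omega⟩) :=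
        hchain j (by omega)
      have hL1 : (L ++ [a]).get ⟨j, by omega⟩ = L.get ⟨j, by omega⟩ := by
        exact List.getElem_append_left (by omega)
      rw [hL1] at h3
      by_cases hj1 : j + 1 < n
      · have hL2 : (L ++ [a]).get ⟨j + 1, by omega⟩ = L.get ⟨j + 1, by omega⟩ := by
          exact List.getElem_append_left (by omega)
        rw [hL2] at h3
        have hmod : (j + 1) % n = j + 1 := Nat.mod_eq_of_lt hj1
        convert h3 using 2
        all_goals exact Fin.ext (by simp [hmod])
      · have hjn : j + 1 = n := by omega
        have hL2 : (L ++ [a]).get ⟨j + 1, by omega⟩ = a := by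
          have : (L ++ [a]).get ⟨j + 1, by omega⟩ = (L ++ [a]).get ⟨L.length, by simp⟩ := by
            congr 1
            simp [hL0, hjn]
          rw [this]
          simp
        rw [hL2] at h3
        have hmod : (j + 1) % n = 0 := by rw [hjn]; simp
        have hget0 : ∀ (h : (j + 1) % n < L.length), L.get ⟨(j + 1) % n, h⟩ = a := by
          intro h
          have h0 : ((⟨(j + 1) % n, h⟩ : Fin L.length)) = ⟨0, by rw [hL0]; omega⟩ :=
            Fin.ext (by simpa using hmod)
          rw [h0]
          rfl
        rw [hget0 _]
        exact h3
    have hv : (i + 1).val = (i.val + 1) % n := by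
      rw [ZMod.val_add, ZMod.val_one]
    have h5 := hkey i.val (ZMod.val_lt i)
    convert h5 using 2
    all_goals exact Fin.ext (by simp [hv])
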